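/- For every first-order formula φ built from atomic formulas, ¬, ∧, ∨, ∀ (with ∃x ψ expressed as ¬∀x ¬ψ), the Krivine-style translation φ^Kr = ¬φ_Kr is equivalent to the Gödel-Gentzen translation φ^N in minimal logic. -/

import Mathlib

/-- First-order formulas (de Bruijn indices for variables; atoms are
predicate symbols applied to lists of variables). `¬φ` abbreviates `φ → ⊥`. -/
inductive Fm : Type where
  | atom : ℕ → List ℕ → Fm
  | falsum : Fm
  | and : Fm → Fm → Fm
  | or : Fm → Fm → Fm
  | imp : Fm → Fm → Fm
  | all : Fm → Fm
  | ex : Fm → Fm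
  deriving DecidableEq

namespace Fm

/-- negation: ¬φ := φ → ⊥ -/
def neg (p : Fm) : Fm := imp p falsum

/-- biconditional, as a conjunction of two implications -/
def iff (p q : Fm) : Fm := and (imp p q) (imp q p)

/-- rename free de Bruijn variables -/
def rename (f : ℕ → ℕ) : Fm → Fm
  | atom i a => atom i (a.map f)
  | falsum => falsum
  | and p q => and (rename f p) (rename f q)
  | or p q => or (rename f p) (rename f q)
  | imp p q => imp (rename f p) (rename f q)
  | all p => all (rename (fun n => match n with | 0 => 0 | m+1 => f m + 1) p)
  | ex p => ex (rename (fun n => match n with | 0 => 0 | m+1 => f m + 1) p)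

/-- shift all free variables up by one -/
def lift (p : Fm) : Fm := rename Nat.succ p

/-- substitute the variable `k` for de Bruijn index 0 -/
def inst (k : ℕ) (p : Fm) : Fm := rename (fun n => match n with | 0 => k | m+1 => m) p

end Fm

inductive Logic : Type where
  | minimal | intuitionistic | classical
  deriving DecidableEq

/-- Natural deduction for minimal / intuitionistic / classical first-order logic:
minimal logic has no ex falso rule; intuitionistic logic adds ex falso;
classical logic further adds excluded middle. -/
inductive Pf : Logic → Set Fm → Fm → Prop where
  | ax {L Γ p} : p ∈ Γ → Pf L Γ p
  | andI {L Γ p q} : Pf L Γ p → Pf L Γ q → Pf L Γ (.and p q)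
  | andE1 {L Γ p q} : Pf L Γ (.and p q) → Pf L Γ p
  | andE2 {L Γ p q} : Pf L Γ (.and p q) → Pf L Γ q
  | orI1 {L Γ p q} : Pf L Γ p → Pf L Γ (.or p q)
  | orI2 {L Γ p q} : Pf L Γ q → Pf L Γ (.or p q)
  | orE {L Γ p q r} : Pf L Γ (.or p q) → Pf L (insert p Γ) r → Pf L (insert q Γ) r →
      Pf L Γ r
  | impI {L Γ p q} : Pf L (insert p Γ) q → Pf L Γ (.imp p q)
  | impE {L Γ p q} : Pf L Γ (.imp p q) → Pf L Γ p → Pf L Γ q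
  | allI {L Γ p} : Pf L (Fm.lift '' Γ) p → Pf L Γ (.all p)
  | allE {L Γ p} (k : ℕ) : Pf L Γ (.all p) → Pf L Γ (p.inst k)
  | exI {L Γ p} (k : ℕ) : Pf L Γ (p.inst k) → Pf L Γ (.ex p)
  | exE {L Γ p r} : Pf L Γ (.ex p) → Pf L (insert p (Fm.lift '' Γ)) r.lift → Pf L Γ r
  | exfalso {L Γ p} : L ≠ .minimal → Pf L Γ .falsum → Pf L Γ p
  | em {Γ p} : Pf .classical Γ (.or p (.neg p))

/-- The Gödel–Gentzen negative translation. -/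
def N : Fm → Fm
  | .atom i a => .neg (.neg (.atom i a))
  | .falsum => .falsum
  | .and p q => .and (N p) (N q)
  | .or p q => .neg (.and (.neg (N p)) (.neg (N q)))
  | .imp p q => .imp (N p) (N q)
  | .all p => .all (N p)
  | .ex p => .neg (.all (.neg (N p)))

/-- The inner Krivine translation φ_Kr (representing the negation of φ):
θ_Kr = ¬θ for atomic θ; (¬φ)_Kr = ¬φ_Kr; (φ ∧ ψ)_Kr = φ_Kr ∨ ψ_Kr;
(φ ∨ ψ)_Kr = φ_Kr ∧ ψ_Kr; (∀x φ)_Kr = ∃x φ_Kr.  (The clauses for `falsum`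
and `ex` are irrelevant junk: the translation is only applied to formulas in
the ¬, ∧, ∨, ∀ fragment, and on that fragment the `imp` clause below computes
exactly (¬φ)_Kr = ¬φ_Kr.) -/
def KrB : Fm → Fm
  | .atom i a => .neg (.atom i a)
  | .imp p q => .imp (KrB p) q
  | .and p q => .or (KrB p) (KrB q)
  | .or p q => .and (KrB p) (KrB q)
  | .all p => .ex (KrB p)
  | .falsum => .falsum
  | .ex p => .ex p

/-- The Krivine translation φ^Kr := ¬φ_Kr. -/
def Kr (p : Fm) : Fm := .neg (KrB p)

/-- The fragment of formulas built from atoms by ¬, ∧, ∨, ∀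
(with ∃x ψ expressed as ¬∀x ¬ψ). -/
inductive KrFrag : Fm → Prop where
  | atom (i a) : KrFrag (.atom i a)
  | neg {p} : KrFrag p → KrFrag (Fm.neg p)
  | and {p q} : KrFrag p → KrFrag q → KrFrag (.and p q)
  | or {p q} : KrFrag p → KrFrag q → KrFrag (.or p q)
  | all {p} : KrFrag p → KrFrag (.all p)

/-! ### Auxiliary lemmas -/

namespace Fm

theorem rename_comp (p : Fm) : ∀ f g : ℕ → ℕ, rename f (rename g p) = rename (fun n => f (g n)) p := by
  induction p with
  | atom i a => intro f g; simp [rename, List.map_map]; try rfl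
  | falsum => intro f g; rfl
  | and p q ihp ihq => intro f g; simp [rename, ihp, ihq]
  | or p q ihp ihq => intro f g; simp [rename, ihp, ihq]
  | imp p q ihp ihq => intro f g; simp [rename, ihp, ihq]
  | all p ihp =>
      intro f g; simp only [rename, ihp]
      exact congrArg Fm.all
        (congrArg (fun f => rename f p) (funext fun n => by cases n <;> rfl))
  | ex p ihp =>
      intro f g; simp only [rename, ihp]
      exact congrArg Fm.ex
        (congrArg (fun f => rename f p) (funext fun n => by cases n <;> rfl))

theorem rename_id (p : Fm) : ∀ f : ℕ → ℕ, (∀ n, f n = n) → rename f p = p := by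
  induction p with
  | atom i a => intro f hf; have : f = id := funext hf; simp [rename, this]
  | falsum => intro f hf; rfl
  | and p q ihp ihq => intro f hf; simp [rename, ihp f hf, ihq f hf]
  | or p q ihp ihq => intro f hf; simp [rename, ihp f hf, ihq f hf]
  | imp p q ihp ihq => intro f hf; simp [rename, ihp f hf, ihq f hf]
  | all p ihp =>
      intro f hf; simp only [rename]
      rw [ihp _ (fun n => by cases n <;> simp [hf])]
  | ex p ihp =>
      intro f hf; simp only [rename]
      rw [ihp _ (fun n => by cases n <;> simp [hf])]

/-- instantiating the freshly-lifted variable under a binder recovers the formula -/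
theorem inst_zero_lift_shift (q : Fm) :
    (rename (fun n => match n with | 0 => 0 | m+1 => Nat.succ m + 1) q).inst 0 = q := by
  unfold inst
  rw [rename_comp]
  exact rename_id q _ (fun n => by cases n <;> rfl)

end Fm

/-- Weakening. -/
theorem Pf.weaken {L : Logic} {Γ Δ : Set Fm} {p : Fm} (h : Pf L Γ p) (s : Γ ⊆ Δ) :
    Pf L Δ p := by
  induction h generalizing Δ with
  | ax hm => exact .ax (s hm)
  | andI _ _ ih1 ih2 => exact .andI (ih1 s) (ih2 s)
  | andE1 _ ih => exact .andE1 (ih s)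
  | andE2 _ ih => exact .andE2 (ih s)
  | orI1 _ ih => exact .orI1 (ih s)
  | orI2 _ ih => exact .orI2 (ih s)
  | orE _ _ _ ih ih1 ih2 =>
      exact .orE (ih s) (ih1 (Set.insert_subset_insert s)) (ih2 (Set.insert_subset_insert s))
  | impI _ ih => exact .impI (ih (Set.insert_subset_insert s))
  | impE _ _ ih1 ih2 => exact .impE (ih1 s) (ih2 s)
  | allI _ ih => exact .allI (ih (Set.image_mono s))
  | allE k _ ih => exact .allE k (ih s)
  | exI k _ ih => exact .exI k (ih s)
  | exE _ _ ih1 ih2 =>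
      exact .exE (ih1 s) (ih2 (Set.insert_subset_insert (Set.image_mono s)))
  | exfalso hL _ ih => exact .exfalso hL (ih s)
  | em => exact .em

theorem Pf.a0 {L Γ p} : Pf L (insert p Γ) p := .ax (Set.mem_insert _ _)
theorem Pf.a1 {L Γ p q} : Pf L (insert q (insert p Γ)) p :=
  .ax (Set.mem_insert_of_mem _ (Set.mem_insert _ _))
theorem Pf.a2 {L Γ p q r} : Pf L (insert r (insert q (insert p Γ))) p :=
  .ax (Set.mem_insert_of_mem _ (Set.mem_insert_of_mem _ (Set.mem_insert _ _)))

theorem Pf.iff_refl {L Γ p} : Pf L Γ (Fm.iff p p) := .andI (.impI .a0) (.impI .a0)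

/-- for every formula in the ¬, ∧, ∨, ∀ fragment, minimal logic
proves φ^Kr ↔ φ^N. -/
theorem krivine_iff_godel_gentzen {φ : Fm} (h : KrFrag φ) :
    Pf .minimal ∅ (Fm.iff (Kr φ) (N φ)) := by
  induction h with
  | atom i a => exact Pf.iff_refl
  | neg hp ih =>
      have IH : ∀ Γ, Pf .minimal Γ (Fm.iff (Kr _) (N _)) :=
        fun Γ => ih.weaken (Set.empty_subset _)
      refine Pf.andI (.impI (.impI ?_)) (.impI (.impI ?_))
      · -- from ¬Kr p and N p derive falsum
        exact Pf.impE Pf.a1 (.impE (Pf.andE2 (IH _)) .a0)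
      · exact Pf.impE Pf.a1 (.impE (Pf.andE1 (IH _)) .a0)
  | and hp hq ih1 ih2 =>
      have IH1 : ∀ Γ, Pf .minimal Γ (Fm.iff (Kr _) (N _)) :=
        fun Γ => ih1.weaken (Set.empty_subset _)
      have IH2 : ∀ Γ, Pf .minimal Γ (Fm.iff (Kr _) (N _)) :=
        fun Γ => ih2.weaken (Set.empty_subset _)
      refine Pf.andI (.impI (.andI ?_ ?_)) (.impI (.impI ?_))
      · exact Pf.impE (Pf.andE1 (IH1 _)) (.impI (.impE Pf.a1 (.orI1 .a0)))
      · exact Pf.impE (Pf.andE1 (IH2 _)) (.impI (.impE Pf.a1 (.orI2 .a0)))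
      · refine Pf.orE Pf.a0 ?_ ?_
        · exact Pf.impE (Pf.impE (Pf.andE2 (IH1 _)) (Pf.andE1 Pf.a2)) Pf.a0
        · exact Pf.impE (Pf.impE (Pf.andE2 (IH2 _)) (Pf.andE2 Pf.a2)) Pf.a0
  | or hp hq ih1 ih2 =>
      rename_i p q
      have IH1 : ∀ Γ, Pf .minimal Γ (Fm.iff (Kr _) (N _)) :=
        fun Γ => ih1.weaken (Set.empty_subset _)
      have IH2 : ∀ Γ, Pf .minimal Γ (Fm.iff (Kr _) (N _)) :=
        fun Γ => ih2.weaken (Set.empty_subset _)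
      refine Pf.andI (.impI (.impI ?_)) (.impI (.impI ?_))
      · -- ¬(A ∧ B), ¬N p ∧ ¬N q ⊢ ⊥
        refine Pf.impE (p := Kr p) ?_ (.impI ?_)
        · -- ¬ Kr p, i.e. ¬¬A
          exact Pf.impI (.impE (Pf.andE1 Pf.a1) (.impE (Pf.andE1 (IH1 _)) .a0))
        · refine Pf.impE (p := Kr q) ?_ (.impI ?_)
          · exact Pf.impI (.impE (Pf.andE2 Pf.a2) (.impE (Pf.andE1 (IH2 _)) .a0))
          · exact Pf.impE (Pf.ax (Set.mem_insert_of_mem _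
              (Set.mem_insert_of_mem _ (Set.mem_insert_of_mem _ (Set.mem_insert _ _)))))
              (.andI Pf.a1 Pf.a0)
      · -- ¬(¬N p ∧ ¬N q), A ∧ B ⊢ ⊥
        refine Pf.impE Pf.a1 (.andI (.impI ?_) (.impI ?_))
        · exact Pf.impE (.impE (Pf.andE2 (IH1 _)) .a0) (Pf.andE1 Pf.a1)
        · exact Pf.impE (.impE (Pf.andE2 (IH2 _)) .a0) (Pf.andE2 Pf.a1)
  | all hp ih =>
      rename_i p
      have IH : ∀ Γ, Pf .minimal Γ (Fm.iff (Kr p) (N p)) :=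
        fun Γ => ih.weaken (Set.empty_subset _)
      refine Pf.andI (.impI ?_) (.impI (.impI ?_))
      · -- ¬∃ KrB p ⊢ ∀ N p
        apply Pf.allI
        rw [Set.image_insert_eq, Set.image_empty]
        refine Pf.impE (Pf.andE1 (IH _)) (.impI ?_)
        -- KrB p, lift(¬∃ KrB p) ⊢ ⊥
        refine Pf.impE (p := Fm.lift (.ex (KrB p))) Pf.a1 ?_
        show Pf .minimal _ (Fm.ex (Fm.rename _ (KrB p)))
        have := Pf.exI (L := .minimal)
          (Γ := insert (KrB p) (insert (Fm.lift (Fm.neg (.ex (KrB p)))) ∅))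
          (p := Fm.rename (fun n => match n with | 0 => 0 | m+1 => Nat.succ m + 1) (KrB p)) 0
        rw [Fm.inst_zero_lift_shift] at this
        exact this Pf.a0
      · -- ∀ N p, ∃ KrB p ⊢ ⊥
        refine Pf.exE Pf.a0 ?_
        rw [Set.image_insert_eq, Set.image_insert_eq, Set.image_empty]
        show Pf .minimal _ Fm.falsum
        refine Pf.impE (q := Fm.falsum) ?_ Pf.a0
        -- derive ¬ KrB p = Kr p from N p
        refine Pf.impE (Pf.andE2 (IH _)) ?_
        have := Pf.allE (L := .minimal)
          (Γ := insert (KrB p) (insert (Fm.lift (.ex (KrB p))) (insert (Fm.lift (.all (N p))) ∅)))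
          (p := Fm.rename (fun n => match n with | 0 => 0 | m+1 => Nat.succ m + 1) (N p)) 0
        rw [Fm.inst_zero_lift_shift] at this
        exact this Pf.a2
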